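/- arXiv:1608.03315 — 4 statements merged into one kernel-verified Lean document; each statement's English description precedes it below -/
import Mathlib

section
/- Let 0 → A₁ → A₂ → A₃ → A₄ → 0 be an exact sequence of modules over a (commutative) ring R, with A₁ and A₄ finite. Then for any element γ ∈ R, the kernel and the cokernel of the induced map A₂/(γ·A₂) → A₃/(γ·A₃) both have cardinality at most |A₁|·|A₄|. -/
private lemma mem_span_smul_top {R M : Type*} [CommRing R] [AddCommGroup M] [Module R M]
    (γ : R) (x : M) :
    x ∈ (Ideal.span {γ} • ⊤ : Submodule R M) ↔ ∃ y, γ • y = x := by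
  rw [Submodule.ideal_span_singleton_smul, ← SetLike.mem_coe, Submodule.coe_pointwise_smul,
    Set.mem_smul_set]
  simp

/-- Let `0 → A₁ → A₂ → A₃ → A₄ → 0` be an exact sequence of `R`-modules with `A₁, A₄` finite.
Then for any `γ ∈ R`, the kernel and cokernel of the induced map
`A₂/(γ·A₂) → A₃/(γ·A₃)` are finite of cardinality at most `|A₁|·|A₄|`. -/
theorem stmt0 {R : Type*} [CommRing R]
    (A₁ A₂ A₃ A₄ : Type*)
    [AddCommGroup A₁] [AddCommGroup A₂] [AddCommGroup A₃] [AddCommGroup A₄]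
    [Module R A₁] [Module R A₂] [Module R A₃] [Module R A₄]
    [Finite A₁] [Finite A₄]
    (f₁ : A₁ →ₗ[R] A₂) (f₂ : A₂ →ₗ[R] A₃) (f₃ : A₃ →ₗ[R] A₄)
    (hinj : Function.Injective f₁) (hsurj : Function.Surjective f₃)
    (h12 : LinearMap.range f₁ = LinearMap.ker f₂)
    (h23 : LinearMap.range f₂ = LinearMap.ker f₃)
    (γ : R)
    (hcomp : (Ideal.span {γ} • ⊤ : Submodule R A₂) ≤ (Ideal.span {γ} • ⊤ : Submodule R A₃).comap f₂) :
    (Finite (LinearMap.ker (Submodule.mapQ (Ideal.span {γ} • ⊤) (Ideal.span {γ} • ⊤) f₂ hcomp)) ∧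
      Nat.card (LinearMap.ker (Submodule.mapQ (Ideal.span {γ} • ⊤) (Ideal.span {γ} • ⊤) f₂ hcomp)) ≤
        Nat.card A₁ * Nat.card A₄) ∧
    (Finite ((A₃ ⧸ (Ideal.span {γ} • ⊤ : Submodule R A₃)) ⧸
        LinearMap.range (Submodule.mapQ (Ideal.span {γ} • ⊤) (Ideal.span {γ} • ⊤) f₂ hcomp)) ∧
      Nat.card ((A₃ ⧸ (Ideal.span {γ} • ⊤ : Submodule R A₃)) ⧸
        LinearMap.range (Submodule.mapQ (Ideal.span {γ} • ⊤) (Ideal.span {γ} • ⊤) f₂ hcomp)) ≤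
        Nat.card A₁ * Nat.card A₄) := by
  classical
  set S₂ : Submodule R A₂ := Ideal.span {γ} • ⊤ with hS₂def
  set S₃ : Submodule R A₃ := Ideal.span {γ} • ⊤ with hS₃def
  set q : (A₂ ⧸ S₂) →ₗ[R] (A₃ ⧸ S₃) := Submodule.mapQ S₂ S₃ f₂ hcomp with hqdef
  -- torsion subtype of A₄
  -- choice data for the kernel surjection
  have hg : ∀ t : {t : A₄ // γ • t = 0}, ∃ x : A₂, ∃ y : A₃, f₂ x = γ • y ∧ f₃ y = t.val := by
    intro t
    obtain ⟨y, hy⟩ := hsurj t.val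
    have hker : γ • y ∈ LinearMap.ker f₃ := by
      simp [LinearMap.mem_ker, map_smul, hy, t.prop]
    rw [← h23] at hker
    obtain ⟨x, hx⟩ := hker
    exact ⟨x, y, hx, hy⟩
  choose g yfun hgy hfy using hg
  have hrange_ker : ∀ x : A₂, f₃ (f₂ x) = 0 := by
    intro x
    have : f₂ x ∈ LinearMap.ker f₃ := h23 ▸ LinearMap.mem_range_self f₂ x
    exact this
  -- the kernel surjection
  set F : A₁ × {t : A₄ // γ • t = 0} → LinearMap.ker q :=
    fun p => ⟨S₂.mkQ (f₁ p.1 + g p.2), by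
      rw [LinearMap.mem_ker, hqdef, Submodule.mkQ_apply, Submodule.mapQ_apply,
        Submodule.Quotient.mk_eq_zero]
      have : f₂ (f₁ p.1 + g p.2) = γ • yfun p.2 := by
        have h1 : f₂ (f₁ p.1) = 0 := by
          have : f₁ p.1 ∈ LinearMap.ker f₂ := h12 ▸ LinearMap.mem_range_self f₁ p.1
          exact this
        rw [map_add, h1, zero_add, hgy]
      rw [this, hS₃def]
      exact (mem_span_smul_top γ _).mpr ⟨yfun p.2, rfl⟩⟩ with hFdef
  have hFsurj : Function.Surjective F := by
    rintro ⟨k, hk⟩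
    obtain ⟨x, rfl⟩ := S₂.mkQ_surjective k
    rw [LinearMap.mem_ker, hqdef, Submodule.mkQ_apply, Submodule.mapQ_apply,
      Submodule.Quotient.mk_eq_zero, hS₃def, mem_span_smul_top] at hk
    obtain ⟨y', hy'⟩ := hk
    have ht : γ • f₃ y' = 0 := by
      rw [← map_smul, hy', hrange_ker]
    set t : {t : A₄ // γ • t = 0} := ⟨f₃ y', ht⟩ with htdef
    have hydiff : y' - yfun t ∈ LinearMap.ker f₃ := by
      simp [LinearMap.mem_ker, map_sub, hfy t, htdef, hfy]
    rw [← h23] at hydiff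
    obtain ⟨z, hz⟩ := hydiff
    have hkerf2 : x - g t - γ • z ∈ LinearMap.ker f₂ := by
      rw [LinearMap.mem_ker, map_sub, map_sub, map_smul, hz, hgy, ← hy', smul_sub]
      abel
    rw [← h12] at hkerf2
    obtain ⟨a, ha⟩ := hkerf2
    refine ⟨(a, t), ?_⟩
    apply Subtype.ext
    show S₂.mkQ (f₁ a + g t) = S₂.mkQ x
    rw [ha]
    have : x - (x - g t - γ • z + g t) = γ • z := by abel
    rw [Submodule.mkQ_apply, Submodule.mkQ_apply, Submodule.Quotient.eq]
    rw [show x - g t - γ • z + g t - x = -(γ • z) by abel]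
    exact S₂.neg_mem ((mem_span_smul_top γ _).mpr ⟨z, rfl⟩)
  have hfinK : Finite (LinearMap.ker q) := Finite.of_surjective F hFsurj
  have hcardK : Nat.card (LinearMap.ker q) ≤ Nat.card A₁ * Nat.card A₄ := by
    calc Nat.card (LinearMap.ker q) ≤ Nat.card (A₁ × {t : A₄ // γ • t = 0}) :=
          Nat.card_le_card_of_surjective F hFsurj
      _ = Nat.card A₁ * Nat.card {t : A₄ // γ • t = 0} := Nat.card_prod _ _
      _ ≤ Nat.card A₁ * Nat.card A₄ :=
          Nat.mul_le_mul_left _ (Finite.card_subtype_le _)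
  -- cokernel
  choose y' hy' using hsurj
  set G : A₄ → (A₃ ⧸ S₃) ⧸ LinearMap.range q :=
    fun u => Submodule.Quotient.mk (Submodule.Quotient.mk (y' u)) with hGdef
  have hGsurj : Function.Surjective G := by
    intro c
    obtain ⟨c', rfl⟩ := Submodule.Quotient.mk_surjective _ c
    obtain ⟨y, rfl⟩ := Submodule.Quotient.mk_surjective _ c'
    refine ⟨f₃ y, ?_⟩
    have hydiff : y' (f₃ y) - y ∈ LinearMap.ker f₃ := by
      simp [LinearMap.mem_ker, map_sub, hy' (f₃ y)]
    rw [← h23] at hydiff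
    obtain ⟨z, hz⟩ := hydiff
    rw [hGdef]
    rw [Submodule.Quotient.eq]
    refine ⟨Submodule.Quotient.mk z, ?_⟩
    rw [hqdef]
    show Submodule.mapQ S₂ S₃ f₂ hcomp (S₂.mkQ z) = _
    rw [Submodule.mkQ_apply, Submodule.mapQ_apply, hz]
    simp [Submodule.Quotient.mk_sub]
  have hfinC : Finite ((A₃ ⧸ S₃) ⧸ LinearMap.range q) := Finite.of_surjective G hGsurj
  have hcardC : Nat.card ((A₃ ⧸ S₃) ⧸ LinearMap.range q) ≤ Nat.card A₁ * Nat.card A₄ := by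
    have h1 : Nat.card ((A₃ ⧸ S₃) ⧸ LinearMap.range q) ≤ Nat.card A₄ :=
      Nat.card_le_card_of_surjective G hGsurj
    have h2 : 1 ≤ Nat.card A₁ := Nat.one_le_iff_ne_zero.mpr (Nat.card_pos).ne'
    calc Nat.card ((A₃ ⧸ S₃) ⧸ LinearMap.range q) ≤ Nat.card A₄ := h1
      _ = 1 * Nat.card A₄ := (one_mul _).symm
      _ ≤ Nat.card A₁ * Nat.card A₄ := Nat.mul_le_mul_right _ h2
  exact ⟨⟨hfinK, hcardK⟩, ⟨hfinC, hcardC⟩⟩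
end

section
/- Let p be a prime and let J(X) = b₁X + b₂X² + ⋯ + b_dX^d ∈ ℚ_p[X] be a polynomial with zero constant term such that pⁱ·bᵢ ∈ pℤ_p for all i = 1,…,d. Let φ: ℚ_p[[X]] → ℚ_p[[X]] be the substitution operator defined by φ(f)(X) = f(φ(X)) for a fixed φ(X) ∈ Xℤ_p[[X]] with φ(X) ≡ X^p mod p. Then the series l(X) = Σ_{k≥0} (−1)^k (J(φ))^k ∘ X converges coefficientwise in ℚ_p[[X]], i.e. l(X) is a well-defined power series. -/
open PowerSeries

/-- Substitution `f(g(X))` of a power series `g` with zero constant term into `f`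
(for `g` with `constantCoeff g = 0` this is the usual composition). -/
noncomputable def pcomp {R : Type*} [CommSemiring R] (f g : PowerSeries R) : PowerSeries R :=
  PowerSeries.mk fun m => ∑ k ∈ Finset.range (m + 1),
    PowerSeries.coeff k f * PowerSeries.coeff m (g ^ k)

/-- The iterates `φ^{(k)}(X)`: `φiter φ 0 = X` and `φiter φ (k+1) = φ(φ^{(k)}(X))`. -/
noncomputable def φiter {R : Type*} [CommSemiring R] (φ : PowerSeries R) : ℕ → PowerSeries R
  | 0 => PowerSeries.X
  | k + 1 => pcomp φ (φiter φ k)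

/-- The operator `J(φ)`: `f ↦ b₁ f(φ(X)) + ⋯ + b_d f(φ^{(d)}(X))`. -/
noncomputable def Jop {R : Type*} [CommSemiring R] (d : ℕ) (b : ℕ → R) (φ : PowerSeries R)
    (f : PowerSeries R) : PowerSeries R :=
  ∑ i ∈ Finset.Icc 1 d, PowerSeries.C (b i) * pcomp f (φiter φ i)

open Finset IsUltrametricDist

section aux
variable {R : Type*} [CommRing R]

lemma coeff_pcomp (f g : PowerSeries R) (m : ℕ) :
    coeff m (pcomp f g) = ∑ k ∈ Finset.range (m + 1),
      coeff k f * coeff m (g ^ k) := by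
  simp [pcomp]

lemma coeff_pow_eq_zero_of_lt {g : PowerSeries R} (hg : constantCoeff g = 0)
    {m k : ℕ} (h : m < k) : coeff m (g ^ k) = 0 := by
  have hX : (X : PowerSeries R) ^ k ∣ g ^ k :=
    pow_dvd_pow_of_dvd (PowerSeries.X_dvd_iff.mpr hg) k
  exact (PowerSeries.X_pow_dvd_iff.mp hX) m h

lemma pcomp_X (f : PowerSeries R) : pcomp f X = f := by
  ext m
  rw [coeff_pcomp]
  simp only [← X_pow_eq, PowerSeries.coeff_X_pow]  -- hope X^k coeff lemma
  rw [Finset.sum_eq_single m]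
  · simp
  · intro k hk hkm; rw [if_neg (Ne.symm hkm), mul_zero]
  · intro h; simp at h

lemma constantCoeff_pcomp (f g : PowerSeries R) :
    constantCoeff (pcomp f g) = constantCoeff f := by
  have := coeff_pcomp f g 0
  simpa using this

lemma coeff_eval₂_poly (P : Polynomial R) (g : PowerSeries R) {m n : ℕ}
    (hn : P.natDegree < n) :
    coeff m (P.eval₂ C g) = ∑ k ∈ Finset.range n, P.coeff k * coeff m (g ^ k) := by
  rw [Polynomial.eval₂_eq_sum_range' C hn g, map_sum]
  exact Finset.sum_congr rfl fun k _ => coeff_C_mul _ _ _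

lemma coeff_eval₂_congr {g : PowerSeries R} (hg : constantCoeff g = 0)
    {P Q : Polynomial R} {m : ℕ} (h : ∀ k, k ≤ m → P.coeff k = Q.coeff k) :
    coeff m (P.eval₂ C g) = coeff m (Q.eval₂ C g) := by
  set n := max (max P.natDegree Q.natDegree + 1) (m + 1) with hn
  have hP : P.natDegree < n := lt_of_lt_of_le (Nat.lt_succ_of_le (le_max_left _ _)) (le_max_left _ _)
  have hQ : Q.natDegree < n := lt_of_lt_of_le (Nat.lt_succ_of_le (le_max_right _ _)) (le_max_left _ _)
  rw [coeff_eval₂_poly P g hP, coeff_eval₂_poly Q g hQ]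
  refine Finset.sum_congr rfl fun k _ => ?_
  rcases le_or_gt k m with hk | hk
  · rw [h k hk]
  · rw [coeff_pow_eq_zero_of_lt hg hk, mul_zero, mul_zero]

lemma coeff_pcomp_eq_eval₂ {g : PowerSeries R} (hg : constantCoeff g = 0)
    (f : PowerSeries R) (m : ℕ) :
    coeff m (pcomp f g) = coeff m ((trunc (m+1) f).eval₂ C g) := by
  rw [coeff_pcomp, coeff_eval₂_poly _ g (natDegree_trunc_lt f m)]
  refine Finset.sum_congr rfl fun k hk => ?_
  rw [Finset.mem_range] at hk
  rw [PowerSeries.coeff_trunc, if_pos hk]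

lemma pcomp_mul {g : PowerSeries R} (hg : constantCoeff g = 0) (f₁ f₂ : PowerSeries R) :
    pcomp (f₁ * f₂) g = pcomp f₁ g * pcomp f₂ g := by
  ext m
  set A := trunc (m+1) f₁ with hA
  set B := trunc (m+1) f₂ with hB
  have hco : ∀ k, k ≤ m → (trunc (m+1) (f₁*f₂)).coeff k = (A*B).coeff k := by
    intro k hk
    have hk' : k < m + 1 := Nat.lt_succ_of_le hk
    have e1 : (A*B).coeff k = coeff k ((A : PowerSeries R) * (B : PowerSeries R)) := by
      rw [← Polynomial.coe_mul, Polynomial.coeff_coe]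
    have e2 : coeff k ((A : PowerSeries R) * (B : PowerSeries R))
        = coeff k ((trunc (m+1) ((A : PowerSeries R) * (B : PowerSeries R)) : Polynomial R) : PowerSeries R) :=
      (coeff_coe_trunc_of_lt hk').symm
    have e3 : trunc (m+1) ((A : PowerSeries R) * (B : PowerSeries R)) = trunc (m+1) (f₁ * f₂) := by
      rw [hA, hB]; exact trunc_trunc_mul_trunc f₁ f₂
    rw [PowerSeries.coeff_trunc, if_pos hk', e1, e2, e3, coeff_coe_trunc_of_lt hk']
  calc coeff m (pcomp (f₁ * f₂) g)
      = coeff m ((trunc (m+1) (f₁*f₂)).eval₂ C g) := coeff_pcomp_eq_eval₂ hg _ m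
    _ = coeff m ((A*B).eval₂ C g) := coeff_eval₂_congr hg hco
    _ = coeff m (A.eval₂ C g * B.eval₂ C g) := by rw [Polynomial.eval₂_mul]
    _ = coeff m (pcomp f₁ g * pcomp f₂ g) := by
        rw [PowerSeries.coeff_mul, PowerSeries.coeff_mul]
        refine Finset.sum_congr rfl fun uv huv => ?_
        rw [Finset.HasAntidiagonal.mem_antidiagonal] at huv
        have hu : uv.1 ≤ m := le_of_le_of_eq (Nat.le_add_right _ _) huv
        have hv : uv.2 ≤ m := le_of_le_of_eq (Nat.le_add_left _ _) huv
        rw [coeff_pcomp_eq_eval₂ hg f₁ uv.1, coeff_pcomp_eq_eval₂ hg f₂ uv.2]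
        congr 1
        · exact (coeff_eval₂_congr hg (fun k hk => by
            rw [hA, PowerSeries.coeff_trunc, PowerSeries.coeff_trunc]
            have : k < uv.1 + 1 := Nat.lt_succ_of_le hk
            rw [if_pos this, if_pos (lt_of_lt_of_le this (by omega))])).symm
        · exact (coeff_eval₂_congr hg (fun k hk => by
            rw [hB, PowerSeries.coeff_trunc, PowerSeries.coeff_trunc]
            have : k < uv.2 + 1 := Nat.lt_succ_of_le hk
            rw [if_pos this, if_pos (lt_of_lt_of_le this (by omega))])).symm

lemma pcomp_one {g : PowerSeries R} : pcomp 1 g = 1 := by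
  ext m
  rw [coeff_pcomp]
  rcases Nat.eq_zero_or_pos m with rfl | hm
  · simp
  · rw [Finset.sum_eq_single 0]
    · simp
    · intro k hk hk0
      rw [PowerSeries.coeff_one, if_neg (by omega), zero_mul]
    · simp
lemma pcomp_pow {g : PowerSeries R} (hg : constantCoeff g = 0) (f : PowerSeries R) (j : ℕ) :
    pcomp (f ^ j) g = (pcomp f g) ^ j := by
  induction j with
  | zero => simpa using pcomp_one
  | succ j ih => rw [pow_succ, pcomp_mul hg, ih, pow_succ]

end aux

section padic
variable {p : ℕ} [Fact p.Prime]

lemma coeff_mul_bound {f g : PowerSeries ℚ_[p]} {A B : ℝ} (hA : 0 ≤ A) (hB : 0 ≤ B)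
    (hf : ∀ m, ‖coeff m f‖ ≤ A) (hg : ∀ m, ‖coeff m g‖ ≤ B) (m : ℕ) :
    ‖coeff m (f * g)‖ ≤ A * B := by
  rw [PowerSeries.coeff_mul]
  refine norm_sum_le_of_forall_le_of_nonneg (mul_nonneg hA hB) fun uv _ => ?_
  rw [norm_mul]
  exact mul_le_mul (hf _) (hg _) (norm_nonneg _) hA

section est
variable {φ : PowerSeries ℚ_[p]} (hφ0 : constantCoeff φ = 0)
    (hφint : ∀ k, ‖coeff k φ‖ ≤ 1)
    (hφp : ∀ k, ‖coeff k (φ - X ^ p)‖ ≤ (p : ℝ)⁻¹)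

include hφint in
lemma pow_int (j : ℕ) (m : ℕ) : ‖coeff m (φ ^ j)‖ ≤ 1 := by
  induction j generalizing m with
  | zero => simp [PowerSeries.coeff_one]; split <;> simp
  | succ j ih =>
    rw [pow_succ]
    simpa using coeff_mul_bound zero_le_one zero_le_one ih hφint m

lemma coeff_X_pow_le (m k : ℕ) : ‖coeff m ((X : PowerSeries ℚ_[p]) ^ k)‖ ≤ 1 := by
  rw [PowerSeries.coeff_X_pow]; split <;> simp

include hφint hφp in
lemma pow_modp (j : ℕ) (m : ℕ) : ‖coeff m (φ ^ j - X ^ (p * j))‖ ≤ (p : ℝ)⁻¹ := by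
  have hp0 : (0:ℝ) ≤ (p : ℝ)⁻¹ := by positivity
  induction j generalizing m with
  | zero => simp
  | succ j ih =>
    have key : φ ^ (j+1) - X ^ (p * (j+1)) =
        φ * (φ ^ j - X ^ (p * j)) + (φ - X ^ p) * X ^ (p * j) := by
      rw [mul_add_one p j, pow_add]
      ring
    rw [key, map_add]
    refine le_trans (norm_add_le_max _ _) (max_le ?_ ?_)
    · simpa using coeff_mul_bound zero_le_one hp0 hφint ih m
    · simpa using coeff_mul_bound hp0 zero_le_one hφp (fun m => coeff_X_pow_le m (p*j)) m
end est

section est2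
variable {φ : PowerSeries ℚ_[p]} (hφ0 : constantCoeff φ = 0)
    (hφint : ∀ k, ‖coeff k φ‖ ≤ 1)
    (hφp : ∀ k, ‖coeff k (φ - X ^ p)‖ ≤ (p : ℝ)⁻¹)

include hφ0 hφint hφp in
lemma base_phi {j : ℕ} (hj : 1 ≤ j) (m : ℕ) :
    ‖coeff m (φ ^ j)‖ ≤ (m : ℝ) / (j * p) := by
  have hp1 : (1:ℝ) < p := by exact_mod_cast (Fact.out : p.Prime).one_lt
  have hp0 : (0:ℝ) < p := by linarith
  have hj0 : (0:ℝ) < j := by exact_mod_cast hj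
  rcases lt_or_ge m j with hmj | hmj
  · rw [coeff_pow_eq_zero_of_lt hφ0 hmj, norm_zero]
    positivity
  · rcases eq_or_ne m (p * j) with rfl | hne
    · calc ‖coeff (p*j) (φ ^ j)‖ ≤ 1 := pow_int hφint j _
        _ ≤ ((p*j : ℕ) : ℝ) / (j * p) := by
            rw [le_div_iff₀ (by positivity)]
            push_cast; ring_nf; rfl
    · have h1 : coeff m (φ ^ j) = coeff m (φ ^ j - X ^ (p * j)) := by
        rw [map_sub, PowerSeries.coeff_X_pow, if_neg hne, sub_zero]
      rw [h1]
      refine le_trans (pow_modp hφint hφp j m) ?_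
      rw [div_eq_mul_inv, mul_inv, ← mul_assoc]
      have hm : (j:ℝ) ≤ (m:ℝ) := by exact_mod_cast hmj
      calc (p:ℝ)⁻¹ = 1 * (p:ℝ)⁻¹ := (one_mul _).symm
        _ ≤ (m:ℝ) * (j:ℝ)⁻¹ * (p:ℝ)⁻¹ := by
            have : (1:ℝ) ≤ (m:ℝ) * (j:ℝ)⁻¹ := by
              rw [le_mul_inv_iff₀ hj0, one_mul]; exact hm
            apply mul_le_mul_of_nonneg_right this (by positivity)

include hφ0 in
lemma constantCoeff_φiter (i : ℕ) : constantCoeff (φiter φ i) = 0 := by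
  cases i with
  | zero => simp [φiter]
  | succ i => rw [φiter, constantCoeff_pcomp]; exact hφ0

include hφ0 hφint hφp in
lemma P_bound : ∀ i, 1 ≤ i → ∀ j m : ℕ, 1 ≤ j →
    ‖coeff m ((φiter φ i) ^ j)‖ ≤ (m : ℝ) / (j * (p:ℝ) ^ i) := by
  have hp1 : (1:ℝ) < p := by exact_mod_cast (Fact.out : p.Prime).one_lt
  have hp0 : (0:ℝ) < p := by linarith
  intro i hi
  induction i, hi using Nat.le_induction with
  | base =>
    intro j m hj
    have : φiter φ 1 = φ := by rw [φiter, φiter, pcomp_X]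
    rw [this, pow_one]
    exact base_phi hφ0 hφint hφp hj m
  | succ i hi ih =>
    intro j m hj
    have hg0 : constantCoeff (φiter φ i) = 0 := constantCoeff_φiter hφ0 i
    have hrw : (φiter φ (i+1)) ^ j = pcomp (φ ^ j) (φiter φ i) := by
      rw [φiter, ← pcomp_pow hg0]
    rw [hrw, coeff_pcomp]
    have hC : (0:ℝ) ≤ (m : ℝ) / (j * (p:ℝ) ^ (i+1)) := by positivity
    refine norm_sum_le_of_forall_le_of_nonneg hC fun r hr => ?_
    rcases Nat.eq_zero_or_pos r with rfl | hr1
    · have : coeff 0 (φ ^ j) = 0 := by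
        rw [coeff_zero_eq_constantCoeff, map_pow, hφ0, zero_pow (by omega)]
      rw [this, zero_mul, norm_zero]; exact hC
    · rw [norm_mul]
      have h1 := base_phi hφ0 hφint hφp hj r
      have h2 := ih r m hr1
      calc ‖coeff r (φ ^ j)‖ * ‖coeff m ((φiter φ i) ^ r)‖
          ≤ ((r : ℝ) / (j * p)) * ((m : ℝ) / (r * (p:ℝ) ^ i)) := by
            apply mul_le_mul h1 h2 (norm_nonneg _) (by positivity)
        _ = (m : ℝ) / (j * (p:ℝ) ^ (i+1)) := by
            have hr0 : (0:ℝ) < r := by exact_mod_cast hr1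
            have hj0 : (0:ℝ) < j := by exact_mod_cast hj
            field_simp
            ring
end est2


section main
variable {φ : PowerSeries ℚ_[p]} (hφ0 : constantCoeff φ = 0)
    (hφint : ∀ k, ‖coeff k φ‖ ≤ 1)
    (hφp : ∀ k, ‖coeff k (φ - X ^ p)‖ ≤ (p : ℝ)⁻¹)
    (d : ℕ) (b : ℕ → ℚ_[p])
    (hb : ∀ i, 1 ≤ i → i ≤ d → ‖(p : ℚ_[p]) ^ i * b i‖ ≤ (p : ℝ)⁻¹)

include hφ0 hφint hφp hb in
lemma main_bound (k m : ℕ) :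
    ‖coeff m ((Jop d b φ)^[k] X)‖ ≤ (m : ℝ) * ((p : ℝ)⁻¹) ^ k := by
  have hp1 : (1:ℝ) < p := by exact_mod_cast (Fact.out : p.Prime).one_lt
  have hp0 : (0:ℝ) < p := by linarith
  induction k generalizing m with
  | zero =>
    simp only [Function.iterate_zero, id_eq, pow_zero, mul_one]
    rw [PowerSeries.coeff_X]
    split
    · next h => rw [h]; simp
    · simp
  | succ k ih =>
    rw [Function.iterate_succ_apply']
    set f := (Jop d b φ)^[k] X with hf
    rw [Jop, map_sum]
    have hC : (0:ℝ) ≤ (m:ℝ) * ((p : ℝ)⁻¹) ^ (k+1) := by positivity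
    refine norm_sum_le_of_forall_le_of_nonneg hC fun i hi => ?_
    rw [Finset.mem_Icc] at hi
    rw [coeff_C_mul, norm_mul, coeff_pcomp]
    have hbi : ‖b i‖ ≤ (p:ℝ) ^ i * (p:ℝ)⁻¹ := by
      have h1 := hb i hi.1 hi.2
      rw [norm_mul, norm_pow, Padic.norm_p] at h1
      have h2 : ((p:ℝ)⁻¹) ^ i > 0 := by positivity
      calc ‖b i‖ = ((p:ℝ)⁻¹)^i * ‖b i‖ * (p:ℝ)^i := by
            rw [mul_comm _ (‖b i‖), mul_assoc, ← mul_pow, inv_mul_cancel₀ (ne_of_gt hp0), one_pow, mul_one]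
        _ ≤ (p:ℝ)⁻¹ * (p:ℝ)^i := by
            apply mul_le_mul_of_nonneg_right h1 (by positivity)
        _ = (p:ℝ)^i * (p:ℝ)⁻¹ := mul_comm _ _
    have hinner : ‖∑ j ∈ Finset.range (m+1), coeff j f * coeff m ((φiter φ i) ^ j)‖
        ≤ (m:ℝ) * ((p:ℝ)⁻¹)^k * ((p:ℝ)^i)⁻¹ := by
      refine norm_sum_le_of_forall_le_of_nonneg (by positivity) fun j _ => ?_
      rcases Nat.eq_zero_or_pos j with rfl | hj1
      · have h0 : ‖coeff 0 f‖ ≤ 0 := by simpa using ih 0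
        rw [norm_mul]
        have : ‖coeff 0 f‖ = 0 := le_antisymm h0 (norm_nonneg _)
        rw [this, zero_mul]
        positivity
      · rw [norm_mul]
        have h1 := ih j
        have h2 := P_bound hφ0 hφint hφp i hi.1 j m hj1
        have hj0 : (0:ℝ) < j := by exact_mod_cast hj1
        calc ‖coeff j f‖ * ‖coeff m ((φiter φ i) ^ j)‖
            ≤ ((j:ℝ) * ((p:ℝ)⁻¹)^k) * ((m:ℝ) / ((j:ℝ) * (p:ℝ)^i)) := by
              apply mul_le_mul h1 h2 (norm_nonneg _) (by positivity)
          _ = (m:ℝ) * ((p:ℝ)⁻¹)^k * ((p:ℝ)^i)⁻¹ := by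
              field_simp
    calc ‖b i‖ * ‖∑ j ∈ Finset.range (m+1), coeff j f * coeff m ((φiter φ i) ^ j)‖
        ≤ ((p:ℝ)^i * (p:ℝ)⁻¹) * ((m:ℝ) * ((p:ℝ)⁻¹)^k * ((p:ℝ)^i)⁻¹) :=
          mul_le_mul hbi hinner (norm_nonneg _) (by positivity)
      _ = (m:ℝ) * ((p:ℝ)⁻¹)^(k+1) := by
          field_simp
          rw [pow_succ]; field_simp
end main


end padic

/-- Let `J(X) = b₁X + ⋯ + b_dX^d ∈ ℚ_p[X]` with `pⁱbᵢ ∈ pℤ_p` and let `φ` be the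
substitution operator for some `φ(X) ∈ Xℤ_p[[X]]` with `φ(X) ≡ X^p mod p`. Then the series
`l(X) = Σ_{k≥0} (−1)^k (J(φ))^k ∘ X` converges coefficientwise in `ℚ_p[[X]]`. -/
theorem stmt1 (p : ℕ) [Fact p.Prime] (d : ℕ) (hd : 1 ≤ d)
    (b : ℕ → ℚ_[p])
    (hb : ∀ i, 1 ≤ i → i ≤ d → ‖(p : ℚ_[p]) ^ i * b i‖ ≤ (p : ℝ)⁻¹)
    (φ : PowerSeries ℚ_[p])
    (hφ0 : PowerSeries.constantCoeff φ = 0)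
    (hφint : ∀ k, ‖PowerSeries.coeff k φ‖ ≤ 1)
    (hφp : ∀ k, ‖PowerSeries.coeff k (φ - PowerSeries.X ^ p)‖ ≤ (p : ℝ)⁻¹) :
    ∃ l : PowerSeries ℚ_[p], ∀ m : ℕ,
      Filter.Tendsto
        (fun N => PowerSeries.coeff m
          (∑ k ∈ Finset.range N, ((-1 : ℚ_[p]) ^ k) • ((Jop d b φ)^[k] PowerSeries.X)))
        Filter.atTop (nhds (PowerSeries.coeff m l)) := by
  have hp1 : (1:ℝ) < p := by exact_mod_cast (Fact.out : p.Prime).one_lt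
  set a : ℕ → ℕ → ℚ_[p] := fun m k =>
    ((-1 : ℚ_[p]) ^ k) • (PowerSeries.coeff m ((Jop d b φ)^[k] PowerSeries.X)) with ha
  have hnorm : ∀ m k, ‖a m k‖ ≤ (m : ℝ) * ((p : ℝ)⁻¹) ^ k := by
    intro m k
    rw [ha]
    simp only [smul_eq_mul, norm_mul, norm_pow, norm_neg, norm_one, one_pow, one_mul]
    exact main_bound hφ0 hφint hφp d b hb k m
  have htend : ∀ m, Filter.Tendsto (a m) Filter.cofinite (nhds 0) := by
    intro m
    rw [Nat.cofinite_eq_atTop]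
    apply squeeze_zero_norm (hnorm m)
    have : Filter.Tendsto (fun k : ℕ => ((p:ℝ)⁻¹) ^ k) Filter.atTop (nhds 0) :=
      tendsto_pow_atTop_nhds_zero_of_lt_one (by positivity) (by
        rw [inv_lt_one_iff₀]; right; exact hp1)
    simpa using this.const_mul (m : ℝ)
  have hsum : ∀ m, Summable (a m) := fun m =>
    NonarchimedeanAddGroup.summable_of_tendsto_cofinite_zero (htend m)
  refine ⟨PowerSeries.mk fun m => ∑' k, a m k, fun m => ?_⟩
  rw [PowerSeries.coeff_mk]
  have := (hsum m).hasSum.tendsto_sum_nat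
  refine this.congr fun N => ?_
  rw [map_sum]
  exact Finset.sum_congr rfl fun k _ => (map_smul _ _ _).symm
end

section
/- In the setting of the Lubin–Tate tower above, with J(X) = b₁X + ⋯ + b_dX^d (pⁱbᵢ ∈ pℤ_p) and l(X) = Σ_{k≥0}(−1)^k(J(φ))^k ∘ X, for every n large enough that all terms are defined, one has Tr_{ℚ_p(π_n)/ℚ_p(π_{n−1})} l(π_n) = −α_{p−1} − p·(b₁ l(π_{n−1}) + b₂ l(π_{n−2}) + ⋯ + b_d l(π_{n−d})). -/
open IntermediateField Polynomial

set_option synthInstance.maxHeartbeats 1000000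
set_option maxHeartbeats 1000000

/-- The trace map between two intermediate fields `E ≤ F`. -/
noncomputable def relTrace {K Ω : Type*} [Field K] [Field Ω] [Algebra K Ω]
    {E F : IntermediateField K Ω} (h : E ≤ F) (x : F) : E :=
  letI : Algebra E F := (IntermediateField.inclusion h).toRingHom.toAlgebra
  Algebra.trace E F x

section
variable {p : ℕ} [Fact p.Prime]

noncomputable def phiz (p : ℕ) [Fact p.Prime] (a : ℕ → ℤ_[p]) : ℤ_[p][X] :=
  X ^ p + ∑ i ∈ Finset.Icc 1 (p - 1), C (a i) * X ^ i

noncomputable def phi0 (p : ℕ) [Fact p.Prime] (a : ℕ → ℤ_[p]) : ℤ_[p][X] :=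
  X ^ (p - 1) + ∑ i ∈ Finset.Icc 1 (p - 1), C (a i) * X ^ (i - 1)

noncomputable def iterz (p : ℕ) [Fact p.Prime] (a : ℕ → ℤ_[p]) : ℕ → ℤ_[p][X]
  | 0 => X
  | (j+1) => (iterz p a j).comp (phiz p a)

noncomputable def PhiLT (p : ℕ) [Fact p.Prime] (a : ℕ → ℤ_[p]) (j : ℕ) : ℤ_[p][X] :=
  (phi0 p a).comp (iterz p a j)

theorem sum_deg_lt (a : ℕ → ℤ_[p]) (k : ℕ) (hk : k + 1 ≤ p) :
    (∑ i ∈ Finset.Icc 1 (p - 1), C (a i) * X ^ (i - k)).degree < ((p - k : ℕ) : WithBot ℕ) := by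
  apply lt_of_le_of_lt (degree_sum_le _ _)
  rw [Finset.sup_lt_iff (by exact_mod_cast WithBot.bot_lt_coe _)]
  intro i hi
  simp only [Finset.mem_Icc] at hi
  apply lt_of_le_of_lt (degree_C_mul_X_pow_le _ _)
  exact_mod_cast show i - k < p - k by omega

theorem phiz_monic (a : ℕ → ℤ_[p]) : (phiz p a).Monic := by
  have hp2 : 2 ≤ p := (Fact.out : p.Prime).two_le
  apply monic_X_pow_add
  have := sum_deg_lt a 0 (by omega)
  simpa using this

theorem phi0_monic (a : ℕ → ℤ_[p]) : (phi0 p a).Monic := by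
  have hp2 : 2 ≤ p := (Fact.out : p.Prime).two_le
  apply monic_X_pow_add
  exact sum_deg_lt a 1 (by omega)

theorem phiz_natDegree (a : ℕ → ℤ_[p]) : (phiz p a).natDegree = p := by
  have hp2 : 2 ≤ p := (Fact.out : p.Prime).two_le
  rw [phiz, natDegree_add_eq_left_of_degree_lt, natDegree_X_pow]
  rw [degree_X_pow]
  have := sum_deg_lt a 0 (by omega)
  simpa using this

theorem phi0_natDegree (a : ℕ → ℤ_[p]) : (phi0 p a).natDegree = p - 1 := by
  have hp2 : 2 ≤ p := (Fact.out : p.Prime).two_le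
  rw [phi0, natDegree_add_eq_left_of_degree_lt, natDegree_X_pow]
  rw [degree_X_pow]
  exact sum_deg_lt a 1 (by omega)

theorem iterz_monic (a : ℕ → ℤ_[p]) (j : ℕ) : (iterz p a j).Monic := by
  induction j with
  | zero => exact monic_X
  | succ j ih => exact ih.comp (phiz_monic a) (by
      rw [phiz_natDegree]; exact (Fact.out : p.Prime).ne_zero)

theorem iterz_natDegree (a : ℕ → ℤ_[p]) (j : ℕ) : (iterz p a j).natDegree = p ^ j := by
  induction j with
  | zero => exact natDegree_X
  | succ j ih =>
    rw [iterz, natDegree_comp, ih, phiz_natDegree, pow_succ]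

theorem X_mul_phi0 (a : ℕ → ℤ_[p]) : X * phi0 p a = phiz p a := by
  have hp2 : 2 ≤ p := (Fact.out : p.Prime).two_le
  rw [phi0, phiz, mul_add, Finset.mul_sum]
  congr 1
  · rw [← pow_succ']
    congr 1
    omega
  · apply Finset.sum_congr rfl
    intro i hi
    simp only [Finset.mem_Icc] at hi
    rw [mul_left_comm, ← pow_succ']
    congr 2
    omega

variable (a : ℕ → ℤ_[p]) (ha0 : ∀ i, 1 ≤ i → i ≤ p - 1 → ‖a i‖ ≤ (p:ℝ)⁻¹)
  (ha1 : ‖a 1‖ = (p:ℝ)⁻¹)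
include ha0 ha1
set_option linter.unusedSectionVars false

theorem toZMod_a (i : ℕ) (h1 : 1 ≤ i) (h2 : i ≤ p - 1) : PadicInt.toZMod (a i) = 0 := by
  rw [← RingHom.mem_ker, PadicInt.ker_toZMod, PadicInt.maximalIdeal_eq_span_p]
  have := (PadicInt.norm_le_pow_iff_mem_span_pow (a i) 1).1 (by simpa using ha0 i h1 h2)
  simpa using this

theorem map_phiz : (phiz p a).map PadicInt.toZMod = X ^ p := by
  rw [phiz, Polynomial.map_add, Polynomial.map_pow, Polynomial.map_X, Polynomial.map_sum,
    add_eq_left]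
  apply Finset.sum_eq_zero
  intro i hi
  simp only [Finset.mem_Icc] at hi
  rw [Polynomial.map_mul, Polynomial.map_C, toZMod_a a ha0 ha1 i hi.1 hi.2, map_zero, zero_mul]

theorem map_phi0 : (phi0 p a).map PadicInt.toZMod = X ^ (p - 1) := by
  rw [phi0, Polynomial.map_add, Polynomial.map_pow, Polynomial.map_X, Polynomial.map_sum,
    add_eq_left]
  apply Finset.sum_eq_zero
  intro i hi
  simp only [Finset.mem_Icc] at hi
  rw [Polynomial.map_mul, Polynomial.map_C, toZMod_a a ha0 ha1 i hi.1 hi.2, map_zero, zero_mul]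

theorem map_iterz (j : ℕ) : (iterz p a j).map PadicInt.toZMod = X ^ (p ^ j) := by
  induction j with
  | zero => simp [iterz]
  | succ j ih =>
    rw [iterz, Polynomial.map_comp, ih, map_phiz a ha0 ha1, X_pow_comp,
      ← pow_mul, ← pow_succ']

theorem map_PhiLT (j : ℕ) :
    (PhiLT p a j).map PadicInt.toZMod = X ^ ((p - 1) * p ^ j) := by
  rw [PhiLT, Polynomial.map_comp, map_phi0 a ha0 ha1, map_iterz a ha0 ha1, X_pow_comp, ← pow_mul,
    mul_comm]

theorem PhiLT_monic (j : ℕ) : (PhiLT p a j).Monic :=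
  (phi0_monic a).comp (iterz_monic a j)
    (by rw [iterz_natDegree]; exact pow_ne_zero _ (Fact.out : p.Prime).ne_zero)

theorem PhiLT_natDegree (j : ℕ) : (PhiLT p a j).natDegree = (p - 1) * p ^ j := by
  rw [PhiLT, natDegree_comp, phi0_natDegree, iterz_natDegree]

theorem phiz_eval_zero : (phiz p a).eval 0 = 0 := by
  rw [phiz]
  simp only [eval_add, eval_pow, eval_X, eval_finset_sum, eval_mul, eval_C]
  rw [zero_pow (Fact.out : p.Prime).ne_zero, zero_add]
  apply Finset.sum_eq_zero
  intro i hi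
  simp only [Finset.mem_Icc] at hi
  rw [zero_pow (by omega), mul_zero]

theorem iterz_eval_zero (j : ℕ) : (iterz p a j).eval 0 = 0 := by
  induction j with
  | zero => simp [iterz]
  | succ j ih => rw [iterz, eval_comp, phiz_eval_zero a ha0 ha1, ih]

theorem PhiLT_coeff_zero (j : ℕ) : (PhiLT p a j).coeff 0 = a 1 := by
  have hp2 : 2 ≤ p := (Fact.out : p.Prime).two_le
  rw [coeff_zero_eq_eval_zero, PhiLT, eval_comp, iterz_eval_zero a ha0 ha1, phi0]
  simp only [eval_add, eval_pow, eval_X, eval_finset_sum, eval_mul, eval_C]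
  rw [zero_pow (by omega), zero_add]
  rw [Finset.sum_eq_single 1]
  · simp
  · intro i hi hne
    simp only [Finset.mem_Icc] at hi
    rw [zero_pow (by omega), mul_zero]
  · intro h
    exact absurd (Finset.mem_Icc.2 ⟨le_refl 1, by omega⟩) h

theorem PhiLT_irreducible (j : ℕ) : Irreducible (PhiLT p a j) := by
  have hprime : Prime ((p:ℕ) : ℤ_[p]) := PadicInt.prime_p
  have hPprime : (Ideal.span {((p:ℕ) : ℤ_[p])}).IsPrime :=
    (Ideal.span_singleton_prime hprime.ne_zero).2 hprime
  apply Polynomial.IsEisensteinAt.irreducible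
    (𝓟 := Ideal.span {((p:ℕ) : ℤ_[p])}) ?_ hPprime ((PhiLT_monic a ha0 ha1 j).isPrimitive) ?_
  · apply Polynomial.Monic.isEisensteinAt_of_mem_of_notMem (PhiLT_monic a ha0 ha1 j)
    · exact hPprime.ne_top
    · intro n hn
      have hcoeff : PadicInt.toZMod ((PhiLT p a j).coeff n) = 0 := by
        have := congrArg (fun q => Polynomial.coeff q n) (map_PhiLT a ha0 ha1 j)
        simp only [coeff_map] at this
        rw [this, coeff_X_pow, if_neg]
        rw [PhiLT_natDegree a ha0 ha1] at hn
        omega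
      rw [← RingHom.mem_ker, PadicInt.ker_toZMod, PadicInt.maximalIdeal_eq_span_p] at hcoeff
      exact hcoeff
    · rw [PhiLT_coeff_zero a ha0 ha1 j, Ideal.span_singleton_pow]
      intro hmem
      have := (PadicInt.norm_le_pow_iff_mem_span_pow (a 1) 2).2 hmem
      rw [ha1] at this
      have hp1 : (1:ℝ) < p := by exact_mod_cast (Fact.out : p.Prime).one_lt
      rw [show ((p:ℝ))⁻¹ = (p:ℝ)^(-1 : ℤ) by simp] at this
      have := (zpow_le_zpow_iff_right₀ hp1).1 this
      omega
  · rw [PhiLT_natDegree a ha0 ha1]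
    have hp2 : 2 ≤ p := (Fact.out : p.Prime).two_le
    exact Nat.mul_pos (by omega) (pow_pos (by omega) j)

theorem PhiLT_map_irreducible (j : ℕ) :
    Irreducible ((PhiLT p a j).map (algebraMap ℤ_[p] ℚ_[p])) :=
  ((PhiLT_monic a ha0 ha1 j).irreducible_iff_irreducible_map_fraction_map).1 (PhiLT_irreducible a ha0 ha1 j)
end

theorem relTrace_gen_sub {K Ω : Type*} [Field K] [Field Ω] [Algebra K Ω]
    {E F : IntermediateField K Ω} (h : E ≤ F) [FiniteDimensional K F]
    (x : Ω) (hgen : F = K⟮x⟯)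
    (q : K[X]) (hqm : q.Monic) (hq2 : 2 ≤ q.natDegree)
    (hfr : Module.finrank K E * q.natDegree = Module.finrank K F)
    (c : E) (hc : Polynomial.aeval x q = (c : Ω))
    (s : E) (y : F) (hy : (y : Ω) = x - (s : Ω)) :
    relTrace h y = -(algebraMap K E q.nextCoeff) - q.natDegree • s := by
  letI : Algebra E F := (IntermediateField.inclusion h).toRingHom.toAlgebra
  haveI : IsScalarTower K E F := IsScalarTower.of_algebraMap_eq fun _ => rfl
  have hxF : x ∈ F := hgen ▸ IntermediateField.mem_adjoin_simple_self K x
  haveI : FiniteDimensional K E :=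
    FiniteDimensional.of_injective (IntermediateField.inclusion h).toLinearMap
      (IntermediateField.inclusion h).toRingHom.injective
  haveI : FiniteDimensional E F := FiniteDimensional.right K E F
  have hfinEF : Module.finrank E F = q.natDegree := by
    have ht := Module.finrank_mul_finrank K E F
    have h0 : 0 < Module.finrank K E := Module.finrank_pos
    exact Nat.eq_of_mul_eq_mul_left h0 (by rw [ht, hfr])
  set xF : F := ⟨x, hxF⟩ with hxFdef
  have hxint : IsIntegral K xF := IsIntegral.of_finite K xF
  have hxintΩ : IsIntegral K x := hxint.map F.val
  set g : Polynomial E := q.map (algebraMap K E) - C c with hgdef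
  have hdegC : (C c).degree < (q.map (algebraMap K E)).degree := by
    rw [degree_map, degree_eq_natDegree hqm.ne_zero]
    apply lt_of_le_of_lt degree_C_le
    exact_mod_cast (show 0 < q.natDegree by omega)
  have hgm : g.Monic := (hqm.map _).sub_of_left hdegC
  have hgdeg : g.natDegree = q.natDegree := by
    rw [hgdef, sub_eq_add_neg, natDegree_add_eq_left_of_degree_lt (by rwa [degree_neg]),
      natDegree_map]
  have hgroot : (Polynomial.aeval xF) g = 0 := by
    apply Subtype.val_injective
    have h1 : (Polynomial.aeval xF) g
        = Polynomial.aeval xF (q.map (algebraMap K E)) - algebraMap E F c := by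
      rw [hgdef, map_sub, aeval_C]
    have h2 : (F.val) (Polynomial.aeval xF q) = Polynomial.aeval x q :=
      (Polynomial.aeval_algHom_apply F.val xF q).symm
    rw [h1, aeval_map_algebraMap]
    show (F.val) ((Polynomial.aeval xF) q - (algebraMap E F) c) = (F.val) 0
    rw [map_sub, map_zero, h2, hc, sub_eq_zero]
    rfl
  have htop : IntermediateField.adjoin E {xF} = ⊤ := by
    rw [eq_top_iff]
    rintro ⟨z, hz⟩ _
    have hz' : z ∈ Algebra.adjoin K {x} := by
      rw [← IntermediateField.adjoin_simple_toSubalgebra_of_isAlgebraic hxintΩ.isAlgebraic]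
      exact hgen ▸ hz
    rw [Algebra.adjoin_singleton_eq_range_aeval] at hz'
    obtain ⟨r, hr⟩ := hz'
    have hzr : (⟨z, hz⟩ : F) = Polynomial.aeval xF (r.map (algebraMap K E)) := by
      apply Subtype.val_injective
      rw [aeval_map_algebraMap]
      exact hr.symm.trans (Polynomial.aeval_algHom_apply F.val xF r)
    rw [hzr]
    exact IntermediateField.algebra_adjoin_le_adjoin E {xF}
      (Polynomial.aeval_mem_adjoin_singleton E xF)
  have hxintE : IsIntegral E xF := ⟨g, hgm, by rw [← Polynomial.aeval_def]; exact hgroot⟩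
  let pb : PowerBasis E F := (IntermediateField.adjoin.powerBasis hxintE).map
    ((IntermediateField.equivOfEq htop).trans IntermediateField.topEquiv)
  have hpbgen : pb.gen = xF := rfl
  have hmindeg : (minpoly E xF).natDegree = q.natDegree := by
    rw [← hpbgen, pb.natDegree_minpoly, ← pb.finrank, hfinEF]
  have hminpoly : minpoly E xF = g := by
    have hdvd := minpoly.dvd E xF hgroot
    exact Polynomial.eq_of_monic_of_associated (minpoly.monic hxintE) hgm
      (associated_of_dvd_of_natDegree_le hdvd hgm.ne_zero (by rw [hgdeg, hmindeg]))
  have htr : Algebra.trace E F xF = -(g.nextCoeff) := by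
    rw [← hpbgen, PowerBasis.trace_gen_eq_nextCoeff_minpoly, hpbgen, hminpoly]
  have hnext : g.nextCoeff = algebraMap K E q.nextCoeff := by
    rw [nextCoeff_of_natDegree_pos (by omega : 0 < g.natDegree), hgdeg,
      nextCoeff_of_natDegree_pos (by omega : 0 < q.natDegree), hgdef]
    rw [coeff_sub, coeff_map, coeff_C, if_neg (by omega), sub_zero]
  have hy' : y = xF - algebraMap E F s := by
    apply Subtype.val_injective
    rw [hy]
    rfl
  show Algebra.trace E F y = _
  rw [hy', map_sub, htr, hnext, Algebra.trace_algebraMap, hfinEF]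

/-- In the Lubin–Tate tower, with `J(X) = b₁X + ⋯ + b_dX^d` (`pⁱbᵢ ∈ pℤ_p`) and
`l = [1 − J(φ) + J(φ)² − ⋯] ∘ X` (so that at the points `π_n` the values
`ℓ n = l(π_n)` lie in `ℚ_p(π_n)` and satisfy `ℓ n = π_n − Σᵢ bᵢ ℓ(n−i)`), one has
`Tr_{ℚ_p(π_n)/ℚ_p(π_{n−1})} l(π_n) = −α_{p−1} − p(b₁l(π_{n−1}) + ⋯ + b_d l(π_{n−d}))`. -/
theorem stmt6 (p : ℕ) [Fact p.Prime]
    (Ω : Type*) [Field Ω] [Algebra ℚ_[p] Ω]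
    (α : ℕ → ℚ_[p])
    (hαint : ∀ i, 1 ≤ i → i ≤ p - 1 → ‖α i‖ ≤ (p : ℝ)⁻¹)
    (hα1 : ‖α 1‖ = (p : ℝ)⁻¹)
    (φ : Polynomial ℚ_[p])
    (hφ : φ = X ^ p + ∑ i ∈ Finset.Icc 1 (p - 1), C (α i) * X ^ i)
    (π : ℕ → Ω) (hπ0 : π 0 = 0) (hπne : ∀ n, 1 ≤ n → π n ≠ 0)
    (hπ : ∀ n, Polynomial.aeval (π (n + 1)) φ = π n)
    (d : ℕ) (hd : 1 ≤ d) (b : ℕ → ℚ_[p])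
    (hb : ∀ i, 1 ≤ i → i ≤ d → ‖(p : ℚ_[p]) ^ i * b i‖ ≤ (p : ℝ)⁻¹)
    (ℓ : ℕ → Ω)
    (hmem : ∀ m, ℓ m ∈ (ℚ_[p]⟮π m⟯ : IntermediateField ℚ_[p] Ω))
    (hfe : ∀ n, d + 1 ≤ n →
      ℓ n = π n - ∑ i ∈ Finset.Icc 1 d, algebraMap ℚ_[p] Ω (b i) * ℓ (n - i)) :
    ∀ n : ℕ, ∀ h : (ℚ_[p]⟮π (n + d)⟯ : IntermediateField ℚ_[p] Ω) ≤ ℚ_[p]⟮π (n + d + 1)⟯,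
      ((relTrace h ⟨ℓ (n + d + 1), hmem (n + d + 1)⟩ : (ℚ_[p]⟮π (n + d)⟯ :
          IntermediateField ℚ_[p] Ω)) : Ω) =
        -(algebraMap ℚ_[p] Ω (α (p - 1))) -
          (p : Ω) * ∑ i ∈ Finset.Icc 1 d, algebraMap ℚ_[p] Ω (b i) * ℓ (n + d + 1 - i) := by
  intro n h
  have hp2 : 2 ≤ p := (Fact.out : p.Prime).two_le
  have hpinv1 : ((p:ℝ))⁻¹ ≤ 1 := by
    rw [inv_le_one_iff₀]; right; exact_mod_cast Nat.one_le_iff_ne_zero.2 (by omega)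
  -- integral coefficients
  set a : ℕ → ℤ_[p] := fun i =>
    if hi : 1 ≤ i ∧ i ≤ p - 1 then ⟨α i, le_trans (hαint i hi.1 hi.2) hpinv1⟩ else 0 with ha_def
  have haeq : ∀ i, 1 ≤ i → i ≤ p - 1 → ((a i : ℤ_[p]) : ℚ_[p]) = α i := by
    intro i h1 h2
    simp only [ha_def, dif_pos (And.intro h1 h2)]
    have key : ∀ (c : Prop) [Decidable c] (hc : c) (f : c → ℤ_[p]) (g : ¬c → ℤ_[p]),
        ((dite c f g : ℤ_[p]) : ℚ_[p]) = ((f hc : ℤ_[p]) : ℚ_[p]) :=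
      fun c _ hc f g => by rw [dif_pos hc]
    exact key _ ⟨h1, h2⟩ _ _
  have ha0 : ∀ i, 1 ≤ i → i ≤ p - 1 → ‖a i‖ ≤ (p:ℝ)⁻¹ := by
    intro i h1 h2
    rw [PadicInt.norm_def, haeq i h1 h2]
    exact hαint i h1 h2
  have ha1 : ‖a 1‖ = (p:ℝ)⁻¹ := by
    rw [PadicInt.norm_def, haeq 1 le_rfl (by omega)]
    exact hα1
  have hφq : (phiz p a).map (algebraMap ℤ_[p] ℚ_[p]) = φ := by
    rw [phiz, hφ, Polynomial.map_add, Polynomial.map_pow, Polynomial.map_X, Polynomial.map_sum]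
    congr 1
    apply Finset.sum_congr rfl
    intro i hi
    simp only [Finset.mem_Icc] at hi
    rw [Polynomial.map_mul, Polynomial.map_C, Polynomial.map_pow, Polynomial.map_X,
      PadicInt.algebraMap_apply, haeq i hi.1 hi.2]
  have hφm : φ.Monic := hφq ▸ (phiz_monic a).map _
  have hφdeg : φ.natDegree = p := by
    rw [← hφq, (phiz_monic a).natDegree_map, phiz_natDegree]
  -- evaluation of iterates
  have hiter : ∀ m j, j ≤ m →
      (Polynomial.aeval (π m)) ((iterz p a j).map (algebraMap ℤ_[p] ℚ_[p])) = π (m - j) := by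
    intro m j
    induction j generalizing m with
    | zero => intro _; simp [iterz]
    | succ j ih =>
      intro hjm
      rw [iterz, Polynomial.map_comp, aeval_comp, hφq]
      have hm : m - 1 + 1 = m := by omega
      have : (Polynomial.aeval (π m)) φ = π (m - 1) := by
        conv_lhs => rw [← hm]
        exact hπ (m - 1)
      rw [this, ih (m-1) (by omega)]
      congr 1
      omega
  have hroot : ∀ j,
      (Polynomial.aeval (π (j+1))) ((PhiLT p a j).map (algebraMap ℤ_[p] ℚ_[p])) = 0 := by
    intro j
    rw [PhiLT, Polynomial.map_comp, aeval_comp, hiter (j+1) j (by omega)]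
    have hj1 : j + 1 - j = 1 := by omega
    rw [hj1]
    have hkey : π 1 * (Polynomial.aeval (π 1)) ((phi0 p a).map (algebraMap ℤ_[p] ℚ_[p])) = 0 := by
      have hXφ : (X : ℚ_[p][X]) * (phi0 p a).map (algebraMap ℤ_[p] ℚ_[p]) = φ := by
        rw [← hφq, ← X_mul_phi0, Polynomial.map_mul, Polynomial.map_X]
      have := congrArg (Polynomial.aeval (π 1)) hXφ
      rw [map_mul, aeval_X, hπ 0, hπ0] at this
      exact this
    exact (mul_eq_zero.1 hkey).resolve_left (hπne 1 le_rfl)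
  have hmin : ∀ j, minpoly ℚ_[p] (π (j+1)) = (PhiLT p a j).map (algebraMap ℤ_[p] ℚ_[p]) :=
    fun j => (minpoly.eq_of_irreducible_of_monic (PhiLT_map_irreducible a ha0 ha1 j) (hroot j)
      ((PhiLT_monic a ha0 ha1 j).map _)).symm
  have hint : ∀ k, IsIntegral ℚ_[p] (π k) := by
    intro k
    cases k with
    | zero => rw [hπ0]; exact isIntegral_zero
    | succ j => exact ⟨(PhiLT p a j).map (algebraMap ℤ_[p] ℚ_[p]),
        (PhiLT_monic a ha0 ha1 j).map _, by rw [← Polynomial.aeval_def]; exact hroot j⟩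
  have hfr : ∀ j, Module.finrank ℚ_[p] (ℚ_[p]⟮π (j+1)⟯ : IntermediateField ℚ_[p] Ω)
      = (p-1) * p^j := by
    intro j
    rw [IntermediateField.adjoin.finrank (hint (j+1)), hmin j,
      (PhiLT_monic a ha0 ha1 j).natDegree_map, PhiLT_natDegree a ha0 ha1]
  haveI : FiniteDimensional ℚ_[p] (ℚ_[p]⟮π (n+d+1)⟯ : IntermediateField ℚ_[p] Ω) :=
    IntermediateField.adjoin.finiteDimensional (hint (n+d+1))
  -- monotonicity of the tower
  have hmono : ∀ k t, (ℚ_[p]⟮π k⟯ : IntermediateField ℚ_[p] Ω) ≤ ℚ_[p]⟮π (k + t)⟯ := by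
    intro k t
    induction t with
    | zero => exact le_rfl
    | succ t ih =>
      refine le_trans ih ?_
      rw [IntermediateField.adjoin_simple_le_iff]
      rw [show k + (t+1) = (k+t) + 1 by omega, ← hπ (k+t)]
      exact IntermediateField.algebra_adjoin_le_adjoin _ _
        (Polynomial.aeval_mem_adjoin_singleton _ _)
  have hLmem : ∀ i, 1 ≤ i → i ≤ d →
      ℓ (n+d+1-i) ∈ (ℚ_[p]⟮π (n + d)⟯ : IntermediateField ℚ_[p] Ω) := by
    intro i h1 h2
    have h3 := hmono (n+d+1-i) (i-1)
    rw [show n+d+1-i + (i-1) = n+d by omega] at h3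
    exact h3 (hmem (n+d+1-i))
  -- the element S
  set S : (ℚ_[p]⟮π (n + d)⟯ : IntermediateField ℚ_[p] Ω) :=
    ∑ i ∈ (Finset.Icc 1 d).attach,
      algebraMap ℚ_[p] _ (b i.1) * ⟨ℓ (n+d+1-i.1),
        hLmem i.1 (Finset.mem_Icc.1 i.2).1 (Finset.mem_Icc.1 i.2).2⟩ with hS_def
  have hSval : ((S : (ℚ_[p]⟮π (n + d)⟯ : IntermediateField ℚ_[p] Ω)) : Ω)
      = ∑ i ∈ Finset.Icc 1 d, algebraMap ℚ_[p] Ω (b i) * ℓ (n+d+1-i) := by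
    show ((ℚ_[p]⟮π (n + d)⟯ : IntermediateField ℚ_[p] Ω)).val S = _
    rw [hS_def, map_sum,
      ← Finset.sum_attach (Finset.Icc 1 d) (fun i => algebraMap ℚ_[p] Ω (b i) * ℓ (n+d+1-i))]
    apply Finset.sum_congr rfl
    intro i _
    rfl
  have hy : ((⟨ℓ (n + d + 1), hmem (n + d + 1)⟩ :
      (ℚ_[p]⟮π (n + d + 1)⟯ : IntermediateField ℚ_[p] Ω)) : Ω)
      = π (n + d + 1) - ((S : (ℚ_[p]⟮π (n + d)⟯ : IntermediateField ℚ_[p] Ω)) : Ω) := by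
    rw [hSval]
    exact hfe (n+d+1) (by omega)
  have hfr' : Module.finrank ℚ_[p] (ℚ_[p]⟮π (n+d)⟯ : IntermediateField ℚ_[p] Ω) * φ.natDegree
      = Module.finrank ℚ_[p] (ℚ_[p]⟮π (n+d+1)⟯ : IntermediateField ℚ_[p] Ω) := by
    obtain ⟨e, he⟩ : ∃ e, n + d = e + 1 := ⟨n + d - 1, by omega⟩
    rw [hφdeg, he, hfr e, show e + 1 + 1 = (e+1) + 1 from rfl, hfr (e+1), pow_succ]
    ring
  have hπE : Polynomial.aeval (π (n+d+1)) φ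
      = ((⟨π (n+d), IntermediateField.mem_adjoin_simple_self ℚ_[p] _⟩ :
          (ℚ_[p]⟮π (n + d)⟯ : IntermediateField ℚ_[p] Ω)) : Ω) := hπ (n+d)
  have key := relTrace_gen_sub h (π (n+d+1)) rfl φ hφm (by omega)
    hfr' ⟨π (n+d), IntermediateField.mem_adjoin_simple_self ℚ_[p] _⟩ hπE S
    ⟨ℓ (n + d + 1), hmem (n + d + 1)⟩ hy
  rw [key]
  -- compute nextCoeff φ
  have hc1 : φ.coeff (p-1) = α (p-1) := by
    rw [hφ, coeff_add, coeff_X_pow, if_neg (by omega), zero_add, finset_sum_coeff]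
    rw [Finset.sum_eq_single (p-1)]
    · rw [coeff_C_mul, coeff_X_pow, if_pos rfl, mul_one]
    · intro i hi hne
      rw [coeff_C_mul, coeff_X_pow, if_neg (fun hh => hne hh.symm), mul_zero]
    · intro hnotmem
      exact absurd (Finset.mem_Icc.2 ⟨by omega, le_rfl⟩) hnotmem
  have hnextφ : φ.nextCoeff = α (p-1) := by
    rw [nextCoeff_of_natDegree_pos (by rw [hφdeg]; omega), hφdeg]
    exact hc1
  show ((ℚ_[p]⟮π (n + d)⟯ : IntermediateField ℚ_[p] Ω)).val
      (-((algebraMap ℚ_[p] (ℚ_[p]⟮π (n + d)⟯ : IntermediateField ℚ_[p] Ω)) φ.nextCoeff)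
        - φ.natDegree • S) = _
  rw [map_sub, map_neg, map_nsmul, hnextφ, hφdeg, nsmul_eq_mul,
    show ((ℚ_[p]⟮π (n + d)⟯ : IntermediateField ℚ_[p] Ω)).val S
      = ∑ i ∈ Finset.Icc 1 d, algebraMap ℚ_[p] Ω (b i) * ℓ (n+d+1-i) from hSval]
  rfl
end

section
/- Let p be a prime and Λ = ℤ_p[[X]]. Suppose (e_{n+1}, e_n) ∈ M_e(Λ)² satisfies ω_{n+1} | e_{n+1} and ω_n | e_n, where ω_k = (1+X)^{p^k} − 1, and define recursively (e_i, e_{i−1}) = M_i^{−1}(e_{i+1}, e_i) for i = n, n−1, …, 1, where M_i = [[pA_i, −A'_iΦ_i],[I_e, 0]] with A_i, A'_i ∈ M_e(Λ) and A'_i ∈ GL_e(Λ), and Φ_i = ω_i/ω_{i−1}. Then all e_i lie in M_e(Λ), ω_{i} | e_i for each i, and each e_i is a sum of matrices each divisible by a product of at least ⌈(n−i)/2⌉ factors from the multiset {p, Φ_1, …, Φ_n} (counting p with multiplicity and each Φ_j at most once). Consequently e_1 ≡ 0 mod (p^{⌊n/2⌋−j}, X^{p^{j−1}}) for every j ≥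 1 with ⌊n/2⌋ > j. -/
open PowerSeries

set_option maxHeartbeats 1600000

/-- The key estimate in the construction of the integral characteristic power series:
a backwards recursion `(e_i, e_{i−1}) = M_i⁻¹(e_{i+1}, e_i)` with
`M_i = [[pA_i, −A'_iΦ_i],[I, 0]]`, starting from data divisible by `ω_{n+1}`, `ω_n`,
stays integral, each `e_i` is divisible by `ω_i` and is a sum of terms divisible by at
least `⌈(n−i)/2⌉` factors from `{p, Φ_1, …, Φ_n}` (each `Φ_j` counted at most once), and
consequently `e_1 ≡ 0 mod (p^{⌊n/2⌋−j}, X^{p^{j−1}})` for each `j ≥ 1` with `⌊n/2⌋ > j`. -/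
theorem stmt18 (p : ℕ) [Fact p.Prime] (n r : ℕ) (hn : 1 ≤ n)
    (Φ ω : ℕ → PowerSeries ℤ_[p])
    (hΦ : ∀ i, Φ i = ∑ k ∈ Finset.range p, (1 + PowerSeries.X) ^ (k * p ^ (i - 1)))
    (hω : ∀ i, ω i = (1 + PowerSeries.X) ^ p ^ i - 1)
    (A A' : ℕ → Matrix (Fin r) (Fin r) (PowerSeries ℤ_[p]))
    (hA' : ∀ i, IsUnit (A' i).det)
    (E : ℕ → Matrix (Fin r) (Fin r) (FractionRing (PowerSeries ℤ_[p])))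
    (hrec : ∀ i, 1 ≤ i → i ≤ n →
      E (i - 1) =
        (algebraMap (PowerSeries ℤ_[p]) (FractionRing (PowerSeries ℤ_[p])) (Φ i))⁻¹ •
          (((A' i).map (algebraMap (PowerSeries ℤ_[p]) (FractionRing (PowerSeries ℤ_[p]))))⁻¹ *
            (-(E (i + 1)) + (p : FractionRing (PowerSeries ℤ_[p])) •
              ((A i).map (algebraMap (PowerSeries ℤ_[p]) (FractionRing (PowerSeries ℤ_[p]))) *
                E i))))
    (htop1 : ∃ B : Matrix (Fin r) (Fin r) (PowerSeries ℤ_[p]),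
      E (n + 1) = (ω (n + 1) • B).map
        (algebraMap (PowerSeries ℤ_[p]) (FractionRing (PowerSeries ℤ_[p]))))
    (htop0 : ∃ B : Matrix (Fin r) (Fin r) (PowerSeries ℤ_[p]),
      E n = (ω n • B).map
        (algebraMap (PowerSeries ℤ_[p]) (FractionRing (PowerSeries ℤ_[p])))) :
    (∀ i ≤ n + 1, ∃ B : Matrix (Fin r) (Fin r) (PowerSeries ℤ_[p]),
      E i = B.map (algebraMap (PowerSeries ℤ_[p]) (FractionRing (PowerSeries ℤ_[p]))) ∧
      (∃ Cc : Matrix (Fin r) (Fin r) (PowerSeries ℤ_[p]), B = ω i • Cc) ∧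
      (∀ k l, B k l ∈ Ideal.span {x : PowerSeries ℤ_[p] | ∃ (j : ℕ) (T : Finset ℕ),
        T ⊆ Finset.Icc 1 n ∧ (n - i + 1) / 2 ≤ j + T.card ∧
        x = (p : PowerSeries ℤ_[p]) ^ j * ∏ t ∈ T, Φ t})) ∧
    (∀ j : ℕ, 1 ≤ j → j < n / 2 →
      ∀ B : Matrix (Fin r) (Fin r) (PowerSeries ℤ_[p]),
        E 1 = B.map (algebraMap (PowerSeries ℤ_[p]) (FractionRing (PowerSeries ℤ_[p]))) →
        ∀ k l, B k l ∈ Ideal.span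
          {(p : PowerSeries ℤ_[p]) ^ (n / 2 - j), PowerSeries.X ^ p ^ (j - 1)}) := by
  classical
  have hp : p.Prime := Fact.out
  set φ := algebraMap (PowerSeries ℤ_[p]) (FractionRing (PowerSeries ℤ_[p])) with hφdef
  have hφinj : Function.Injective φ :=
    IsFractionRing.injective (PowerSeries ℤ_[p]) (FractionRing (PowerSeries ℤ_[p]))
  -- basic facts about Φ and ω
  have hω0 : ω 0 = PowerSeries.X := by rw [hω]; simp
  have hΦω : ∀ i, 1 ≤ i → Φ i * ω (i - 1) = ω i := by
    intro i hi
    rw [hΦ, hω, hω]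
    have h1 : ∀ k, (1 + PowerSeries.X : (PowerSeries ℤ_[p])) ^ (k * p ^ (i - 1)) =
        ((1 + PowerSeries.X) ^ (p ^ (i - 1))) ^ k := by
      intro k; rw [← pow_mul, mul_comm]
    simp_rw [h1]
    rw [geom_sum_mul, ← pow_mul, ← pow_succ, show i - 1 + 1 = i from by omega]
  have hωprod : ∀ i, ω i = PowerSeries.X * ∏ t ∈ Finset.Icc 1 i, Φ t := by
    intro i
    induction i with
    | zero => simp [hω0]
    | succ m ihm =>
      have h := hΦω (m + 1) (by omega)
      simp only [Nat.add_sub_cancel] at h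
      rw [← h, ihm, Finset.prod_Icc_succ_top (by omega : 1 ≤ m + 1)]
      ring
  have hΦne : ∀ i, Φ i ≠ 0 := by
    intro i hc
    have h := congrArg (PowerSeries.constantCoeff (R := ℤ_[p])) hc
    rw [hΦ] at h
    simp at h
    exact hp.ne_zero h
  have hωX : ∀ m, ∃ c, ω m = PowerSeries.X ^ (p ^ m) + (p : (PowerSeries ℤ_[p])) * c := by
    intro m
    have h := (Commute.all (1 : (PowerSeries ℤ_[p])) PowerSeries.X).add_pow_prime_pow_eq hp m
    refine ⟨PowerSeries.X * ∑ k ∈ Finset.Ioo 0 (p ^ m),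
      (1 : PowerSeries ℤ_[p]) ^ (k - 1) * PowerSeries.X ^ (p ^ m - k - 1) *
        (((p ^ m).choose k / p : ℕ) : PowerSeries ℤ_[p]), ?_⟩
    rw [hω, h]
    simp only [one_pow]
    ring
  have hΦp : ∀ i, ω i ∣ Φ (i + 1) - (p : (PowerSeries ℤ_[p])) := by
    intro i
    rw [hΦ, hω]
    have hps : (p : (PowerSeries ℤ_[p])) = ∑ _k ∈ Finset.range p, 1 := by simp
    rw [hps, ← Finset.sum_sub_distrib]
    refine Finset.dvd_sum ?_
    intro k _
    have h1 : (1 + PowerSeries.X : (PowerSeries ℤ_[p])) ^ (k * p ^ (i + 1 - 1)) =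
        ((1 + PowerSeries.X) ^ (p ^ i)) ^ k := by
      simp only [Nat.add_sub_cancel]
      rw [← pow_mul, mul_comm]
    rw [h1]
    simpa using sub_dvd_pow_sub_pow ((1 + PowerSeries.X : (PowerSeries ℤ_[p])) ^ (p ^ i)) 1 k
  have hdec : ∀ t, 1 ≤ t → ∃ u v : (PowerSeries ℤ_[p]),
      Φ t = (p : (PowerSeries ℤ_[p])) * u + PowerSeries.X ^ (p ^ (t - 1)) * v := by
    intro t ht
    obtain ⟨g, hg⟩ := hΦp (t - 1)
    obtain ⟨c, hc⟩ := hωX (t - 1)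
    rw [show t - 1 + 1 = t by omega] at hg
    refine ⟨1 + c * g, g, ?_⟩
    have h2 : Φ t = (p : (PowerSeries ℤ_[p])) + ω (t - 1) * g := by rw [← hg]; ring
    rw [h2, hc]; ring
  -- the intermediate ideals
  set I : ℕ → Ideal (PowerSeries ℤ_[p]) := fun i => Ideal.span {x : (PowerSeries ℤ_[p]) | ∃ (j : ℕ) (T : Finset ℕ),
      T ⊆ Finset.Icc (i + 1) n ∧ (n + 1 - i) / 2 ≤ j + T.card ∧
      x = (p : (PowerSeries ℤ_[p])) ^ j * ∏ t ∈ T, Φ t} with hIdef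
  have hIntro : ∀ i (j : ℕ) (T : Finset ℕ), T ⊆ Finset.Icc (i + 1) n →
      (n + 1 - i) / 2 ≤ j + T.card → ((p : (PowerSeries ℤ_[p])) ^ j * ∏ t ∈ T, Φ t) ∈ I i :=
    fun i j T h1 h2 => Ideal.subset_span ⟨j, T, h1, h2, rfl⟩
  have hElim : ∀ (y : (PowerSeries ℤ_[p])) (i : ℕ) (J : Ideal (PowerSeries ℤ_[p])),
      (∀ (jj : ℕ) (T : Finset ℕ), T ⊆ Finset.Icc (i + 1) n →
        (n + 1 - i) / 2 ≤ jj + T.card → y * ((p : (PowerSeries ℤ_[p])) ^ jj * ∏ t ∈ T, Φ t) ∈ J) →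
      ∀ x ∈ I i, y * x ∈ J := by
    intro y i J hgen x hx
    refine Submodule.span_induction (p := fun x _ => y * x ∈ J) ?_ ?_ ?_ ?_ hx
    · rintro x ⟨jj, T, h1, h2, rfl⟩; exact hgen jj T h1 h2
    · simpa using J.zero_mem
    · intro a b _ _ ha hb; rw [mul_add]; exact add_mem ha hb
    · intro a x _ hxmem
      rw [smul_eq_mul, mul_left_comm]
      exact Ideal.mul_mem_left J a hxmem
  have hone : ∀ (x : (PowerSeries ℤ_[p])) (i : ℕ), n ≤ i → x ∈ I i := by
    intro x i hi
    have h1 : ((p : (PowerSeries ℤ_[p])) ^ 0 * ∏ t ∈ (∅ : Finset ℕ), Φ t) ∈ I i :=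
      hIntro i 0 ∅ (Finset.empty_subset _) (by simp; omega)
    simpa using Ideal.mul_mem_left _ x h1
  have hmemp : ∀ i, 1 ≤ i → i ≤ n → ∀ x ∈ I i, (p : (PowerSeries ℤ_[p])) * x ∈ I (i - 1) := by
    intro i hi1 hi2
    refine hElim _ _ _ ?_
    intro jj T h1 h2
    have h3 : (p : (PowerSeries ℤ_[p])) * ((p : (PowerSeries ℤ_[p])) ^ jj * ∏ t ∈ T, Φ t) =
        (p : (PowerSeries ℤ_[p])) ^ (jj + 1) * ∏ t ∈ T, Φ t := by ring
    rw [h3]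
    refine hIntro _ _ _ (h1.trans (Finset.Icc_subset_Icc (by omega) le_rfl)) (by omega)
  have hmemΦ : ∀ i, 1 ≤ i → i ≤ n → ∀ x ∈ I (i + 1), Φ (i + 1) * x ∈ I (i - 1) := by
    intro i hi1 hi2
    refine hElim _ _ _ ?_
    intro jj T h1 h2
    by_cases hin : i + 1 ≤ n
    · have hnm : (i + 1) ∉ T := by
        intro hc
        have := h1 hc
        rw [Finset.mem_Icc] at this
        omega
      have h3 : Φ (i + 1) * ((p : (PowerSeries ℤ_[p])) ^ jj * ∏ t ∈ T, Φ t) =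
          (p : (PowerSeries ℤ_[p])) ^ jj * ∏ t ∈ insert (i + 1) T, Φ t := by
        rw [Finset.prod_insert hnm]; ring
      rw [h3]
      refine hIntro _ _ _ ?_ ?_
      · refine Finset.insert_subset ?_ (h1.trans (Finset.Icc_subset_Icc (by omega) le_rfl))
        rw [Finset.mem_Icc]; omega
      · rw [Finset.card_insert_of_notMem hnm]
        omega
    · -- i = n
      have hieq : i = n := by omega
      have hTe : T = ∅ := by
        refine Finset.subset_empty.1 ?_
        rw [show (∅ : Finset ℕ) = Finset.Icc (i + 1 + 1) n from
          (Finset.Icc_eq_empty (by omega)).symm]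
        exact h1
      subst hTe
      obtain ⟨g, hg⟩ := hΦp i
      have hΦsplit : Φ (i + 1) = (p : (PowerSeries ℤ_[p])) + Φ i * ω (i - 1) * g := by
        rw [hΦω i hi1, ← hg]; ring
      have h4 : Φ (i + 1) * ((p : (PowerSeries ℤ_[p])) ^ jj * ∏ t ∈ (∅ : Finset ℕ), Φ t) =
          (p : (PowerSeries ℤ_[p])) ^ (jj + 1) * ∏ t ∈ (∅ : Finset ℕ), Φ t +
            Φ i * (ω (i - 1) * g * (p : (PowerSeries ℤ_[p])) ^ jj) := by
        rw [hΦsplit]; simp; ring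
      rw [h4]
      refine add_mem (hIntro _ _ _ (Finset.empty_subset _) (by simp; omega)) ?_
      have h5 : Φ i ∈ I (i - 1) := by
        have := hIntro (i - 1) 0 {i} ?_ ?_
        · simpa using this
        · intro t ht
          simp at ht
          subst ht
          rw [Finset.mem_Icc]
          omega
        · simp
          omega
      exact Ideal.mul_mem_right _ _ h5
  -- map and smul
  have hms : ∀ (a : (PowerSeries ℤ_[p])) (M : Matrix (Fin r) (Fin r) (PowerSeries ℤ_[p])),
      (a • M).map φ = φ a • M.map φ := by
    intro a M
    ext k l
    simp [Matrix.map_apply, Matrix.smul_apply, smul_eq_mul, map_mul]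
  -- the main downward induction
  have main : ∀ d, d ≤ n + 1 → ∃ C : Matrix (Fin r) (Fin r) (PowerSeries ℤ_[p]),
      E (n + 1 - d) = ((ω (n + 1 - d)) • C).map φ ∧
      ∀ k l, C k l ∈ I (n + 1 - d) := by
    intro d
    induction d using Nat.strong_induction_on with
    | _ d ih =>
    intro hd
    obtain _ | _ | e := d
    · obtain ⟨B, hB⟩ := htop1
      exact ⟨B, by simpa using hB, fun k l => hone _ _ (by omega)⟩
    · obtain ⟨B, hB⟩ := htop0
      refine ⟨B, ?_, fun k l => hone _ _ (by omega)⟩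
      simpa using hB
    · -- step
      set m := n - e with hmdef
      have hm1 : 1 ≤ m := by omega
      have hmn : m ≤ n := by omega
      obtain ⟨C₁, hC₁, hC₁I⟩ := ih (e + 1) (by omega) (by omega)
      obtain ⟨C₂, hC₂, hC₂I⟩ := ih e (by omega) (by omega)
      have hidx1 : n + 1 - (e + 1) = m := by omega
      have hidx2 : n + 1 - e = m + 1 := by omega
      have hidx0 : n + 1 - (e + 1 + 1) = m - 1 := by omega
      rw [hidx1] at hC₁ hC₁I
      rw [hidx2] at hC₂ hC₂I
      rw [hidx0]
      set U := (A' m)⁻¹ with hUdef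
      have hU1 : A' m * U = 1 := Matrix.mul_nonsing_inv _ (hA' m)
      have hinvmap : ((A' m).map φ)⁻¹ = U.map φ := by
        apply Matrix.inv_eq_right_inv
        rw [← Matrix.map_mul, hU1, Matrix.map_one _ (map_zero φ) (map_one φ)]
      set W : Matrix (Fin r) (Fin r) (PowerSeries ℤ_[p]) :=
        -(Φ (m + 1) • C₂) + (p : (PowerSeries ℤ_[p])) • (A m * C₁) with hWdef
      refine ⟨U * W, ?_, ?_⟩
      · have hrecm := hrec m hm1 hmn
        rw [hC₁, hC₂, hinvmap] at hrecm
        rw [hrecm]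
        have hΦmne : φ (Φ m) ≠ 0 := fun hc => hΦne m (hφinj (by rw [hc, map_zero]))
        have hω1 : ω (m + 1) = Φ m * (Φ (m + 1) * ω (m - 1)) := by
          have h1 := hΦω (m + 1) (by omega)
          simp only [Nat.add_sub_cancel] at h1
          rw [← h1, ← hΦω m hm1]; ring
        have hω2 : ω m = Φ m * ω (m - 1) := (hΦω m hm1).symm
        have hWmap : W.map φ =
            -(φ (Φ (m + 1)) • C₂.map φ) + (p : (FractionRing (PowerSeries ℤ_[p]))) • ((A m).map φ * C₁.map φ) := by
          rw [hWdef]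
          ext a b
          simp only [Matrix.map_apply, Matrix.add_apply, Matrix.neg_apply,
            Matrix.smul_apply, smul_eq_mul, map_add, map_neg, map_mul,
            Matrix.mul_apply, map_sum, map_natCast]
        have hscal : -(φ (ω (m + 1)) • C₂.map φ) +
            (p : (FractionRing (PowerSeries ℤ_[p]))) • ((A m).map φ * (φ (ω m) • C₁.map φ)) =
            φ (Φ m) • (φ (ω (m - 1)) • W.map φ) := by
          rw [hWmap, hω1, hω2, map_mul, map_mul, map_mul, Matrix.mul_smul]
          simp only [smul_add, smul_neg, smul_smul]
          congr 1
          · rw [neg_inj]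
            congr 1
            ring
          · congr 1
            ring
        rw [hms, hms, hms, hscal, Matrix.mul_smul, Matrix.mul_smul,
          inv_smul_smul₀ hΦmne, Matrix.map_mul]
      · intro k l
        have hWmem : ∀ a b, W a b ∈ I (m - 1) := by
          intro a b
          rw [hWdef]
          simp only [Matrix.add_apply, Matrix.neg_apply, Matrix.smul_apply, smul_eq_mul]
          refine add_mem (neg_mem ?_) ?_
          · exact hmemΦ m hm1 hmn _ (hC₂I a b)
          · refine hmemp m hm1 hmn _ ?_
            rw [Matrix.mul_apply]
            exact sum_mem fun c _ => Ideal.mul_mem_left _ _ (hC₁I c b)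
        rw [Matrix.mul_apply]
        exact sum_mem fun c _ => Ideal.mul_mem_left _ _ (hWmem c l)
  -- conclusion 1
  have concl1 : ∀ i ≤ n + 1, ∃ B : Matrix (Fin r) (Fin r) (PowerSeries ℤ_[p]),
      E i = B.map φ ∧
      (∃ Cc : Matrix (Fin r) (Fin r) (PowerSeries ℤ_[p]), B = ω i • Cc) ∧
      (∀ k l, B k l ∈ Ideal.span {x : (PowerSeries ℤ_[p]) | ∃ (j : ℕ) (T : Finset ℕ),
        T ⊆ Finset.Icc 1 n ∧ (n - i + 1) / 2 ≤ j + T.card ∧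
        x = (p : (PowerSeries ℤ_[p])) ^ j * ∏ t ∈ T, Φ t}) := by
    intro i hi
    obtain ⟨C, hC, hCI⟩ := main (n + 1 - i) (by omega)
    rw [show n + 1 - (n + 1 - i) = i by omega] at hC hCI
    refine ⟨ω i • C, hC, ⟨C, rfl⟩, ?_⟩
    intro k l
    rw [Matrix.smul_apply, smul_eq_mul]
    by_cases hin : i ≤ n
    · refine hElim (ω i) i _ ?_ _ (hCI k l)
      intro jj T hT hcount
      have hdisj : Disjoint (Finset.Icc 1 i) T := by
        rw [Finset.disjoint_left]
        intro t ht htT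
        have h1 := Finset.mem_Icc.1 ht
        have h2 := Finset.mem_Icc.1 (hT htT)
        omega
      have heq : ω i * ((p : (PowerSeries ℤ_[p])) ^ jj * ∏ t ∈ T, Φ t) =
          PowerSeries.X * ((p : (PowerSeries ℤ_[p])) ^ jj * ∏ t ∈ Finset.Icc 1 i ∪ T, Φ t) := by
        rw [hωprod i, Finset.prod_union hdisj]; ring
      rw [heq]
      refine Ideal.mul_mem_left _ _ (Ideal.subset_span ⟨jj, Finset.Icc 1 i ∪ T, ?_, ?_, rfl⟩)
      · refine Finset.union_subset (Finset.Icc_subset_Icc le_rfl hin)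
          (hT.trans (Finset.Icc_subset_Icc (by omega) le_rfl))
      · rw [Finset.card_union_of_disjoint hdisj, Nat.card_Icc]
        omega
    · have h1 : (1 : (PowerSeries ℤ_[p])) ∈ Ideal.span {x : (PowerSeries ℤ_[p]) | ∃ (j : ℕ) (T : Finset ℕ),
          T ⊆ Finset.Icc 1 n ∧ (n - i + 1) / 2 ≤ j + T.card ∧
          x = (p : (PowerSeries ℤ_[p])) ^ j * ∏ t ∈ T, Φ t} := by
        refine Ideal.subset_span ⟨0, ∅, Finset.empty_subset _, ?_, by simp⟩
        simp
        omega
      simpa using Ideal.mul_mem_left _ (ω i * C k l) h1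
  refine ⟨concl1, ?_⟩
  -- conclusion 2
  intro j hj1 hj2 B hB k l
  obtain ⟨B₁, hB₁, -, hB₁I⟩ := concl1 1 (by omega)
  have hBeq : B = B₁ := by
    have h2 : B.map φ = B₁.map φ := by rw [← hB, ← hB₁]
    exact Matrix.ext fun k' l' => hφinj (congrFun (congrFun h2 k') l')
  rw [hBeq]
  refine Ideal.span_le.2 ?_ (hB₁I k l)
  rintro x ⟨a, T, hT, hcount, rfl⟩
  -- decompose each Φ t
  have hdec' : ∀ t : ℕ, ∃ u v : (PowerSeries ℤ_[p]), 1 ≤ t →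
      Φ t = (p : (PowerSeries ℤ_[p])) * u + PowerSeries.X ^ (p ^ (t - 1)) * v := by
    intro t
    by_cases ht : 1 ≤ t
    · obtain ⟨u, v, huv⟩ := hdec t ht
      exact ⟨u, v, fun _ => huv⟩
    · exact ⟨0, 0, fun hc => absurd hc ht⟩
  choose u v huv using hdec'
  have hpair : ∀ x : (PowerSeries ℤ_[p]), ((p : (PowerSeries ℤ_[p])) ^ (n / 2 - j) ∣ x ∨ PowerSeries.X ^ (p ^ (j - 1)) ∣ x) →
      x ∈ Ideal.span {(p : (PowerSeries ℤ_[p])) ^ (n / 2 - j), PowerSeries.X ^ (p ^ (j - 1))} := by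
    rintro x (⟨c, rfl⟩ | ⟨c, rfl⟩)
    · exact Ideal.mul_mem_right _ _ (Ideal.subset_span (by simp))
    · exact Ideal.mul_mem_right _ _ (Ideal.subset_span (by simp))
  have hprod : ∏ t ∈ T, Φ t = ∑ S ∈ T.powerset,
      (∏ t ∈ S, ((p : (PowerSeries ℤ_[p])) * u t)) * ∏ t ∈ T \ S, (PowerSeries.X ^ (p ^ (t - 1)) * v t) := by
    rw [← Finset.prod_add]
    refine Finset.prod_congr rfl ?_
    intro t ht
    exact huv t (Finset.mem_Icc.1 (hT ht)).1
  rw [SetLike.mem_coe, hprod, Finset.mul_sum]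
  refine sum_mem ?_
  intro S hS
  have hScard := Finset.mem_powerset.1 hS
  have hcount' : n / 2 ≤ a + T.card := by
    have : (n - 1 + 1) / 2 ≤ a + T.card := hcount
    omega
  by_cases hcase : n / 2 - j ≤ a + S.card
  · refine hpair _ (Or.inl ?_)
    have h1 : ∏ t ∈ S, ((p : (PowerSeries ℤ_[p])) * u t) = (p : (PowerSeries ℤ_[p])) ^ S.card * ∏ t ∈ S, u t := by
      rw [Finset.prod_mul_distrib, Finset.prod_const]
    have heq : (p : (PowerSeries ℤ_[p])) ^ a * ((∏ t ∈ S, ((p : (PowerSeries ℤ_[p])) * u t)) *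
        ∏ t ∈ T \ S, (PowerSeries.X ^ (p ^ (t - 1)) * v t)) =
        ((p : (PowerSeries ℤ_[p])) ^ a * (p : (PowerSeries ℤ_[p])) ^ S.card) * ((∏ t ∈ S, u t) *
        ∏ t ∈ T \ S, (PowerSeries.X ^ (p ^ (t - 1)) * v t)) := by
      rw [h1]; ring
    rw [heq, ← pow_add]
    exact Dvd.dvd.mul_right (pow_dvd_pow _ hcase) _
  · refine hpair _ (Or.inr ?_)
    have hTScard : j + 1 ≤ (T \ S).card := by
      rw [Finset.card_sdiff_of_subset hScard]
      omega
    have hex : ∃ t0 ∈ T \ S, j + 1 ≤ t0 := by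
      by_contra hc
      push_neg at hc
      have hsub2 : T \ S ⊆ Finset.Icc 1 j := by
        intro t ht
        have h1 := Finset.mem_Icc.1 (hT (Finset.sdiff_subset ht))
        rw [Finset.mem_Icc]
        exact ⟨h1.1, by have := hc t ht; omega⟩
      have := Finset.card_le_card hsub2
      rw [Nat.card_Icc] at this
      omega
    obtain ⟨t0, ht0, ht0j⟩ := hex
    have h2 : (PowerSeries.X : (PowerSeries ℤ_[p])) ^ (p ^ (j - 1)) ∣
        PowerSeries.X ^ (p ^ (t0 - 1)) :=
      pow_dvd_pow _ (Nat.pow_le_pow_right hp.pos (by omega))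
    have h3 : (PowerSeries.X : (PowerSeries ℤ_[p])) ^ (p ^ (t0 - 1)) * v t0 ∣
        ∏ t ∈ T \ S, (PowerSeries.X ^ (p ^ (t - 1)) * v t) :=
      Finset.dvd_prod_of_mem _ ht0
    exact ((h2.trans (dvd_mul_right _ _)).trans h3).mul_left _ |>.mul_left _
end
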